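/- Let d ≥ 1 and let r > 0 and δ > 0 be real numbers with δ ≤ r^d. Then the d-dimensional Lebesgue measure of the set {z ∈ ℝ^d : |z_i| < r for all 1 ≤ i ≤ d and |z_1 z_2 ⋯ z_d| < δ} equals 2^d·δ·Σ_{t=0}^{d−1} (1/t!)·(log(r^d/δ))^t. -/

import Mathlib

open MeasureTheory Filter Set Metric Topology
open scoped ENNReal NNReal
noncomputable section
namespace Stmt13Aux

lemma measS (d : ℕ) (r δ : ℝ) :
    MeasurableSet {z : Fin d → ℝ | (∀ i, |z i| < r) ∧ |∏ i, z i| < δ} := by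
  have h1 : MeasurableSet {z : Fin d → ℝ | ∀ i, |z i| < r} := by
    have : {z : Fin d → ℝ | ∀ i, |z i| < r} = ⋂ i, {z | |z i| < r} := by ext z; simp
    rw [this]
    exact MeasurableSet.iInter fun i =>
      measurableSet_lt (measurable_pi_apply i).abs measurable_const
  have h2 : MeasurableSet {z : Fin d → ℝ | |∏ i, z i| < δ} :=
    measurableSet_lt (Finset.measurable_prod _ (fun i _ => measurable_pi_apply i)).abs
      measurable_const
  exact h1.inter h2

lemma volCube (d : ℕ) (r : ℝ) (hr : 0 ≤ r) :
    volume {z : Fin d → ℝ | ∀ i, |z i| < r} = ENNReal.ofReal ((2*r)^d) := by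
  have h : {z : Fin d → ℝ | ∀ i, |z i| < r} = Set.univ.pi fun _ : Fin d => Ioo (-r) r := by
    ext z; simp [abs_lt, Set.mem_pi]
  rw [h, volume_pi_pi]
  rw [Real.volume_Ioo]
  rw [Finset.prod_const, ← ENNReal.ofReal_pow (by linarith)]
  norm_num
  congr 2
  ring

lemma integral_log_pow (t : ℕ) (c a b : ℝ) (hc : 0 < c) (ha : 0 < a) (hab : a ≤ b) :
    ∫ x in a..b, Real.log (c * x) ^ t / x
      = Real.log (c * b) ^ (t+1) / (t+1) - Real.log (c * a) ^ (t+1) / (t+1) := by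
  have hne : ((t:ℝ)+1) ≠ 0 := by positivity
  have hderiv : ∀ x ∈ Set.uIcc a b,
      HasDerivAt (fun y => Real.log (c * y) ^ (t+1) / ((t:ℝ)+1)) (Real.log (c * x) ^ t / x) x := by
    intro x hx
    rw [Set.uIcc_of_le hab] at hx
    have hx0 : 0 < x := lt_of_lt_of_le ha hx.1
    have h1 : HasDerivAt (fun y => Real.log (c * y)) (1 / x) x := by
      have := (Real.hasDerivAt_log (by positivity : c * x ≠ 0)).comp x
        ((hasDerivAt_id x).const_mul c)
      convert this using 1
      rfl
      rfl
      rfl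
      field_simp
    have h2 := (h1.pow (t+1)).div_const ((t:ℝ)+1)
    convert h2 using 1
    rfl
    rfl
    rfl
    push_cast
    field_simp
  have hcont : ContinuousOn (fun x => Real.log (c * x) ^ t / x) (Set.uIcc a b) := by
    rw [Set.uIcc_of_le hab]
    apply ContinuousOn.div
    · apply ContinuousOn.pow
      apply Real.continuousOn_log.comp ((continuous_const.mul continuous_id).continuousOn)
      intro x hx
      have : 0 < x := lt_of_lt_of_le ha hx.1
      simp only [Set.mem_compl_iff, Set.mem_singleton_iff]
      exact (mul_pos hc this).ne'
    · exact continuousOn_id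
    · intro x hx
      have : 0 < x := lt_of_lt_of_le ha hx.1
      exact ne_of_gt this
  have := intervalIntegral.integral_eq_sub_of_hasDerivAt hderiv (hcont.intervalIntegrable)
  rw [this]

lemma keystep (n : ℕ) (r δ : ℝ) :
    volume {z : Fin (n+2) → ℝ | (∀ i, |z i| < r) ∧ |∏ i, z i| < δ}
      = ∫⁻ x : ℝ, volume {y : Fin (n+1) → ℝ |
          (|x| < r ∧ ∀ i, |y i| < r) ∧ |x * ∏ i, y i| < δ} := by
  set T : Set (ℝ × (Fin (n+1) → ℝ)) :=
    {p | (|p.1| < r ∧ ∀ i, |p.2 i| < r) ∧ |p.1 * ∏ i, p.2 i| < δ} with hT_def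
  have hTm : MeasurableSet T := by
    have h : T = ({p : ℝ × (Fin (n+1) → ℝ) | |p.1| < r} ∩ ⋂ i, {p | |p.2 i| < r})
        ∩ {p | |p.1 * ∏ i, p.2 i| < δ} := by
      ext p; simp [hT_def, and_assoc]
    rw [h]
    refine MeasurableSet.inter (MeasurableSet.inter ?_ ?_) ?_
    · exact measurableSet_lt measurable_fst.abs measurable_const
    · exact MeasurableSet.iInter fun i => measurableSet_lt
        (by fun_prop : Measurable fun p : ℝ × (Fin (n+1) → ℝ) => |p.2 i|) measurable_const
    · exact measurableSet_lt
        (by fun_prop : Measurable fun p : ℝ × (Fin (n+1) → ℝ) => |p.1 * ∏ i, p.2 i|)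
        measurable_const
  have hmp := measurePreserving_piFinSuccAbove (fun _ : Fin (n+2) => (volume : Measure ℝ)) 0
  have hpre : (MeasurableEquiv.piFinSuccAbove (fun _ : Fin (n+2) => ℝ) 0) ⁻¹' T
      = {z : Fin (n+2) → ℝ | (∀ i, |z i| < r) ∧ |∏ i, z i| < δ} := by
    ext z
    simp only [Set.mem_preimage, MeasurableEquiv.piFinSuccAbove_apply, hT_def,
      Set.mem_setOf_eq, Fin.insertNthEquiv, Equiv.coe_fn_symm_mk, Fin.zero_succAbove,
      Fin.removeNth]
    have hp : (∏ i : Fin (n+2), z i) = z 0 * ∏ i : Fin (n+1), z i.succ := Fin.prod_univ_succ z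
    rw [hp, Fin.forall_fin_succ (P := fun i => |z i| < r)]
  rw [← hpre, volume_pi, hmp.measure_preimage hTm.nullMeasurableSet]
  have h2 : ((volume : Measure ℝ).prod (Measure.pi fun _ : Fin (n+1) => volume)) T
      = ((volume : Measure ℝ).prod (volume : Measure (Fin (n+1) → ℝ))) T := by
    rw [← volume_pi]
  rw [h2, Measure.prod_apply hTm]
  exact lintegral_congr fun x => rfl
lemma slicestep (n : ℕ) (r δ : ℝ) (hr : 0 < r) (hδ : 0 < δ) (hδr : δ ≤ r ^ (n+2))
    (ih : ∀ r δ : ℝ, 0 < r → 0 < δ → δ ≤ r ^ (n+1) →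
      volume {z : Fin (n+1) → ℝ | (∀ i, |z i| < r) ∧ |∏ i, z i| < δ} =
        ENNReal.ofReal (2 ^ (n+1) * δ *
          ∑ t ∈ Finset.range (n+1), (1 / (t.factorial : ℝ)) * Real.log (r ^ (n+1) / δ) ^ t))
    (x : ℝ) :
    volume {y : Fin (n+1) → ℝ | (|x| < r ∧ ∀ i, |y i| < r) ∧ |x * ∏ i, y i| < δ}
      = Set.indicator (Ioo (-r) r) (fun x => ENNReal.ofReal (
          if |x| < δ / r ^ (n+1) then (2*r)^(n+1)
          else 2^(n+1) * (δ/|x|) * ∑ t ∈ Finset.range (n+1),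
            (1 / (t.factorial : ℝ)) * Real.log (r^(n+1) * |x| / δ) ^ t)) x := by
  set a : ℝ := δ / r ^ (n+1) with ha_def
  have hrn : (0:ℝ) < r ^ (n+1) := pow_pos hr _
  have ha : 0 < a := div_pos hδ hrn
  by_cases hxr : |x| < r
  · have hxmem : x ∈ Ioo (-r) r := by
      rw [Set.mem_Ioo, ← abs_lt]; exact hxr
    rw [Set.indicator_of_mem hxmem]
    by_cases hxa : |x| < a
    · have hseteq : {y : Fin (n+1) → ℝ | (|x| < r ∧ ∀ i, |y i| < r) ∧ |x * ∏ i, y i| < δ}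
          = {y : Fin (n+1) → ℝ | ∀ i, |y i| < r} := by
        ext y
        simp only [Set.mem_setOf_eq]
        constructor
        · exact fun h => h.1.2
        · intro h
          refine ⟨⟨hxr, h⟩, ?_⟩
          have hb : |∏ i, y i| ≤ r ^ (n+1) := by
            rw [Finset.abs_prod]
            calc ∏ i, |y i| ≤ ∏ _i : Fin (n+1), r :=
                  Finset.prod_le_prod (fun i _ => abs_nonneg _) (fun i _ => (h i).le)
              _ = r ^ (n+1) := by simp
          rw [abs_mul]
          calc |x| * |∏ i, y i| ≤ |x| * r^(n+1) :=
                mul_le_mul_of_nonneg_left hb (abs_nonneg x)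
            _ < a * r^(n+1) := mul_lt_mul_of_pos_right hxa hrn
            _ = δ := by rw [ha_def]; field_simp
      rw [hseteq, volCube _ _ hr.le, if_pos hxa]
    · push_neg at hxa
      have hx0 : x ≠ 0 := by
        intro h; rw [h, abs_zero] at hxa; exact absurd hxa (not_le.2 ha)
      have hAbs : 0 < |x| := abs_pos.2 hx0
      have hseteq : {y : Fin (n+1) → ℝ | (|x| < r ∧ ∀ i, |y i| < r) ∧ |x * ∏ i, y i| < δ}
          = {y : Fin (n+1) → ℝ | (∀ i, |y i| < r) ∧ |∏ i, y i| < δ/|x|} := by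
        ext y
        simp only [Set.mem_setOf_eq, abs_mul, lt_div_iff₀ hAbs]
        constructor
        · rintro ⟨⟨-, h1⟩, h2⟩; exact ⟨h1, by linarith [mul_comm (|x|) (|∏ i, y i|)]⟩
        · rintro ⟨h1, h2⟩; exact ⟨⟨hxr, h1⟩, by linarith [mul_comm (|x|) (|∏ i, y i|)]⟩
      have hle : δ/|x| ≤ r^(n+1) := by
        rw [div_le_iff₀ hAbs]
        calc δ = a * r^(n+1) := by rw [ha_def]; field_simp
          _ ≤ |x| * r^(n+1) := mul_le_mul_of_nonneg_right hxa hrn.le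
          _ = r^(n+1) * |x| := mul_comm _ _
      rw [hseteq, ih r (δ/|x|) hr (div_pos hδ hAbs) hle, if_neg (not_lt.2 hxa)]
      congr 2
      rw [div_div_eq_mul_div]
  · have hempty : {y : Fin (n+1) → ℝ | (|x| < r ∧ ∀ i, |y i| < r) ∧ |x * ∏ i, y i| < δ}
        = (∅ : Set (Fin (n+1) → ℝ)) := by
      ext y; simp only [Set.mem_setOf_eq, Set.mem_empty_iff_false, iff_false]
      rintro ⟨⟨h, -⟩, -⟩; exact hxr h
    rw [hempty, measure_empty, Set.indicator_of_notMem]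
    rw [Set.mem_Ioo, ← abs_lt]
    exact hxr

lemma Gprops (n : ℕ) (r δ : ℝ) (hr : 0 < r) (hδ : 0 < δ) (hδr : δ ≤ r ^ (n+2)) :
    let G : ℝ → ℝ := fun x =>
      if |x| < δ / r ^ (n+1) then (2*r)^(n+1)
      else 2^(n+1) * (δ/|x|) * ∑ t ∈ Finset.range (n+1),
        (1 / (t.factorial : ℝ)) * Real.log (r^(n+1) * |x| / δ) ^ t
    (∀ x, 0 ≤ G x) ∧ IntegrableOn G (Icc (-r) r) := by
  intro G
  set a : ℝ := δ / r ^ (n+1) with ha_def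
  have hrn : (0:ℝ) < r ^ (n+1) := pow_pos hr _
  have ha : 0 < a := div_pos hδ hrn
  set L : ℝ := Real.log (r ^ (n+2) / δ) with hL_def
  have hL : 0 ≤ L := Real.log_nonneg ((one_le_div hδ).2 hδr)
  have hlog0 : ∀ x : ℝ, a ≤ |x| → 0 ≤ Real.log (r^(n+1) * |x| / δ) := by
    intro x h1
    apply Real.log_nonneg
    rw [le_div_iff₀ hδ]
    calc (1:ℝ) * δ = a * r^(n+1) := by rw [ha_def]; field_simp
      _ ≤ |x| * r^(n+1) := mul_le_mul_of_nonneg_right h1 hrn.le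
      _ = r^(n+1) * |x| := mul_comm _ _
  have hlogL : ∀ x : ℝ, a ≤ |x| → |x| ≤ r → Real.log (r^(n+1) * |x| / δ) ≤ L := by
    intro x h1 h2
    have hax : 0 < |x| := lt_of_lt_of_le ha h1
    apply Real.log_le_log (by positivity)
    apply (div_le_div_iff_of_pos_right hδ).2
    calc r^(n+1) * |x| ≤ r^(n+1) * r := mul_le_mul_of_nonneg_left h2 hrn.le
      _ = r^(n+2) := by ring
  have hGnn : ∀ x, 0 ≤ G x := by
    intro x
    simp only [G]
    split_ifs with h
    · positivity
    · push_neg at h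
      have hax : 0 < |x| := lt_of_lt_of_le ha h
      have : 0 ≤ ∑ t ∈ Finset.range (n+1),
          (1 / (t.factorial : ℝ)) * Real.log (r^(n+1) * |x| / δ) ^ t := by
        apply Finset.sum_nonneg
        intro t _
        have := hlog0 x h
        positivity
      positivity
  refine ⟨hGnn, ?_⟩
  have hGm : Measurable G := by
    apply Measurable.ite
    · exact measurableSet_lt continuous_abs.measurable measurable_const
    · exact measurable_const
    · apply Measurable.mul
      · exact measurable_const.mul (measurable_const.div continuous_abs.measurable)
      · apply Finset.measurable_sum
        intro t _
        apply Measurable.const_mul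
        apply Measurable.pow_const
        exact Real.measurable_log.comp
          ((measurable_const.mul continuous_abs.measurable).div_const δ)
  apply Measure.integrableOn_of_bounded (M := (2*r)^(n+1) + 2^(n+1) * r^(n+1) *
      ∑ t ∈ Finset.range (n+1), (1/(t.factorial:ℝ)) * L ^ t)
  · exact (measure_Icc_lt_top).ne
  · exact hGm.aestronglyMeasurable
  · rw [ae_restrict_iff' measurableSet_Icc]
    apply ae_of_all
    intro x hx
    rw [Real.norm_eq_abs, abs_of_nonneg (hGnn x)]
    have hxr : |x| ≤ r := abs_le.2 ⟨hx.1, hx.2⟩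
    have hsumL : 0 ≤ ∑ t ∈ Finset.range (n+1), (1/(t.factorial:ℝ)) * L ^ t := by
      apply Finset.sum_nonneg; intro t _; positivity
    simp only [G]
    split_ifs with h
    · nlinarith [mul_pos (pow_pos (by norm_num : (0:ℝ) < 2) (n+1)) hrn, hsumL,
        mul_nonneg (mul_nonneg (pow_nonneg (by norm_num : (0:ℝ) ≤ 2) (n+1)) hrn.le) hsumL]
    · push_neg at h
      have hax : 0 < |x| := lt_of_lt_of_le ha h
      have h1 : δ / |x| ≤ r^(n+1) := by
        rw [div_le_iff₀ hax]
        calc δ = a * r^(n+1) := by rw [ha_def]; field_simp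
          _ ≤ |x| * r^(n+1) := mul_le_mul_of_nonneg_right h hrn.le
          _ = r^(n+1) * |x| := mul_comm _ _
      have h2 : ∑ t ∈ Finset.range (n+1), (1/(t.factorial:ℝ)) * Real.log (r^(n+1) * |x| / δ) ^ t
          ≤ ∑ t ∈ Finset.range (n+1), (1/(t.factorial:ℝ)) * L ^ t := by
        apply Finset.sum_le_sum
        intro t _
        have g0 := hlog0 x h
        have gL := hlogL x h hxr
        have : Real.log (r^(n+1) * |x| / δ) ^ t ≤ L ^ t := pow_le_pow_left₀ g0 gL t
        have ht : (0:ℝ) ≤ 1 / t.factorial := by positivity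
        exact mul_le_mul_of_nonneg_left this ht
      have hsx : 0 ≤ ∑ t ∈ Finset.range (n+1),
          (1/(t.factorial:ℝ)) * Real.log (r^(n+1) * |x| / δ) ^ t := by
        apply Finset.sum_nonneg; intro t _
        have := hlog0 x h; positivity
      have key : 2^(n+1) * (δ/|x|) * ∑ t ∈ Finset.range (n+1),
            (1/(t.factorial:ℝ)) * Real.log (r^(n+1) * |x| / δ) ^ t
          ≤ 2^(n+1) * r^(n+1) * ∑ t ∈ Finset.range (n+1), (1/(t.factorial:ℝ)) * L ^ t := by
        apply mul_le_mul
        · apply mul_le_mul_of_nonneg_left h1 (by positivity)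
        · exact h2
        · exact hsx
        · positivity
      nlinarith [pow_nonneg (mul_nonneg (by norm_num : (0:ℝ) ≤ 2) hr.le) (n+1)]

lemma realint (n : ℕ) (r δ : ℝ) (hr : 0 < r) (hδ : 0 < δ) (hδr : δ ≤ r ^ (n+2))
    (hint : IntegrableOn (fun x =>
      if |x| < δ / r ^ (n+1) then (2*r)^(n+1)
      else 2^(n+1) * (δ/|x|) * ∑ t ∈ Finset.range (n+1),
        (1 / (t.factorial : ℝ)) * Real.log (r^(n+1) * |x| / δ) ^ t) (Icc (-r) r)) :
    ∫ x in Ioo (-r) r, (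
      if |x| < δ / r ^ (n+1) then (2*r)^(n+1)
      else 2^(n+1) * (δ/|x|) * ∑ t ∈ Finset.range (n+1),
        (1 / (t.factorial : ℝ)) * Real.log (r^(n+1) * |x| / δ) ^ t)
      = 2^(n+2) * δ * ∑ t ∈ Finset.range (n+2),
          (1/(t.factorial:ℝ)) * Real.log (r^(n+2)/δ) ^ t := by
  set G : ℝ → ℝ := fun x =>
      if |x| < δ / r ^ (n+1) then (2*r)^(n+1)
      else 2^(n+1) * (δ/|x|) * ∑ t ∈ Finset.range (n+1),
        (1 / (t.factorial : ℝ)) * Real.log (r^(n+1) * |x| / δ) ^ t with hG_def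
  set a : ℝ := δ / r ^ (n+1) with ha_def
  have hrn : (0:ℝ) < r ^ (n+1) := pow_pos hr _
  have ha : 0 < a := div_pos hδ hrn
  have har : a ≤ r := by
    rw [ha_def, div_le_iff₀ hrn]
    calc δ ≤ r ^ (n+2) := hδr
      _ = r * r ^ (n+1) := by ring
  set L : ℝ := Real.log (r ^ (n+2) / δ) with hL_def
  -- interval integrability on subintervals
  have hii : ∀ u v : ℝ, -r ≤ u → u ≤ r → -r ≤ v → v ≤ r → IntervalIntegrable G volume u v := by
    intro u v h1 h2 h3 h4
    rw [intervalIntegrable_iff]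
    apply hint.mono_set
    refine Set.uIoc_subset_uIcc.trans (Set.uIcc_subset_Icc ?_ ?_) <;>
      simp only [Set.mem_Icc] <;> exact ⟨by linarith, by linarith⟩
  -- change to interval integral
  have hIoo : ∫ x in Ioo (-r) r, G x = ∫ x in (-r)..r, G x := by
    rw [intervalIntegral.integral_of_le (by linarith), MeasureTheory.integral_Ioc_eq_integral_Ioo]
  rw [hIoo]
  -- splits
  have split1 := intervalIntegral.integral_add_adjacent_intervals
    (hii (-r) (-a) le_rfl (by linarith) (by linarith) (by linarith))
    (hii (-a) r (by linarith) (by linarith) (by linarith) le_rfl)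
  have split2 := intervalIntegral.integral_add_adjacent_intervals
    (hii (-a) a (by linarith) (by linarith) (by linarith) (by linarith))
    (hii a r (by linarith) (by linarith) (by linarith) le_rfl)
  -- middle piece
  have hmid : ∫ x in (-a)..a, G x = 2*a*(2*r)^(n+1) := by
    have hae : ∀ᵐ x : ℝ, x ≠ a := by
      rw [MeasureTheory.ae_iff]
      have : {x : ℝ | ¬ x ≠ a} = {a} := by ext x; simp
      rw [this]
      exact measure_singleton a
    have hcg : ∫ x in (-a)..a, G x = ∫ x in (-a)..a, (2*r)^(n+1) := by
      apply intervalIntegral.integral_congr_ae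
      filter_upwards [hae] with x hx hmem
      rw [Set.uIoc_of_le (by linarith : -a ≤ a)] at hmem
      have habs : |x| < a := abs_lt.2 ⟨hmem.1, lt_of_le_of_ne hmem.2 hx⟩
      simp only [hG_def]
      rw [if_pos habs]
    rw [hcg, intervalIntegral.integral_const]
    simp only [smul_eq_mul]
    ring
  -- evenness
  have hGeven : ∀ x : ℝ, G (-x) = G x := by
    intro x; simp only [hG_def, abs_neg]
  have hleft : ∫ x in (-r)..(-a), G x = ∫ x in a..r, G x := by
    rw [← intervalIntegral.integral_comp_neg]
    exact intervalIntegral.integral_congr fun x _ => hGeven x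
  -- right piece
  have hright : ∫ x in a..r, G x = 2^(n+1) * δ *
      ∑ t ∈ Finset.range (n+1), (1/((t+1).factorial:ℝ)) * L^(t+1) := by
    have hEq : Set.EqOn G (fun x => ∑ t ∈ Finset.range (n+1),
        (2^(n+1) * δ * (1/(t.factorial:ℝ))) * (Real.log (r^(n+1)/δ * x)^t / x))
        (Set.uIcc a r) := by
      intro x hx
      rw [Set.uIcc_of_le har] at hx
      have hxpos : 0 < x := lt_of_lt_of_le ha hx.1
      have hxa : ¬ |x| < a := by
        rw [abs_of_pos hxpos]; exact not_lt.2 hx.1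
      simp only [hG_def]
      rw [if_neg hxa, abs_of_pos hxpos, Finset.mul_sum]
      apply Finset.sum_congr rfl
      intro t _
      have harg : r^(n+1) * x / δ = r^(n+1)/δ * x := by ring
      rw [harg]
      field_simp
    rw [intervalIntegral.integral_congr hEq]
    rw [intervalIntegral.integral_finset_sum]
    · have hterm : ∀ t ∈ Finset.range (n+1),
          ∫ x in a..r, (2^(n+1)*δ*(1/(t.factorial:ℝ))) * (Real.log (r^(n+1)/δ * x)^t / x)
            = 2^(n+1) * δ * ((1/((t+1).factorial:ℝ)) * L^(t+1)) := by
        intro t _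
        rw [intervalIntegral.integral_const_mul,
          integral_log_pow t _ a r (by positivity) ha har]
        have h1 : r^(n+1)/δ * r = r^(n+2)/δ := by field_simp; ring
        have h2 : r^(n+1)/δ * a = 1 := by rw [ha_def]; field_simp
        rw [h1, h2, Real.log_one, ← hL_def]
        rw [zero_pow (Nat.succ_ne_zero t), Nat.factorial_succ]
        push_cast
        field_simp
        ring
      rw [Finset.sum_congr rfl hterm, ← Finset.mul_sum]
    · intro t _
      apply ContinuousOn.intervalIntegrable
      apply ContinuousOn.mul continuousOn_const
      apply ContinuousOn.div
      · apply ContinuousOn.pow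
        apply Real.continuousOn_log.comp ((continuous_const.mul continuous_id).continuousOn)
        intro x hx
        rw [Set.uIcc_of_le har] at hx
        have hxpos : 0 < x := lt_of_lt_of_le ha hx.1
        simp only [Set.mem_compl_iff, Set.mem_singleton_iff]
        exact (mul_pos (by positivity) hxpos).ne'
      · exact continuousOn_id
      · intro x hx
        rw [Set.uIcc_of_le har] at hx
        exact ne_of_gt (lt_of_lt_of_le ha hx.1)
  -- combine
  rw [← split1, ← split2, hleft, hmid, hright]
  rw [Finset.sum_range_succ' (fun t => (1/(t.factorial:ℝ)) * L ^ t) (n+1)]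
  have hda : 2 * a * (2*r)^(n+1) = 2^(n+2) * δ := by
    rw [ha_def, mul_pow]
    field_simp
    ring
  simp only [Nat.factorial_zero, Nat.cast_one, pow_zero, mul_one]
  rw [hda]
  push_cast
  ring


lemma mainlemma (d : ℕ) : ∀ r δ : ℝ, 0 < r → 0 < δ → δ ≤ r ^ (d+1) →
    volume {z : Fin (d+1) → ℝ | (∀ i, |z i| < r) ∧ |∏ i, z i| < δ} =
      ENNReal.ofReal (2 ^ (d+1) * δ *
        ∑ t ∈ Finset.range (d+1), (1 / (t.factorial : ℝ)) * Real.log (r ^ (d+1) / δ) ^ t) := by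
  induction d with
  | zero =>
    intro r δ hr hδ hδr
    rw [pow_one] at hδr
    have hset : {z : Fin 1 → ℝ | (∀ i, |z i| < r) ∧ |∏ i, z i| < δ}
        = Set.univ.pi fun _ : Fin 1 => Ioo (-δ) δ := by
      ext z
      simp only [Set.mem_setOf_eq, Set.mem_pi, Set.mem_univ, forall_true_left, mem_Ioo,
        Fin.prod_univ_one, Fin.forall_fin_one, ← abs_lt]
      constructor
      · exact fun h => h.2
      · exact fun h => ⟨lt_of_lt_of_le h hδr, h⟩
    rw [hset, volume_pi_pi]
    simp only [Real.volume_Ioo, Finset.prod_const, Finset.card_univ, Fintype.card_fin, pow_one,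
      Finset.sum_range_one, Nat.factorial_zero, Nat.cast_one, pow_zero, mul_one]
    congr 1
    norm_num
    ring
    rw [ENNReal.ofReal_mul hδ.le, ENNReal.ofReal_ofNat]
  | succ n ih =>
    intro r δ hr hδ hδr
    obtain ⟨hGnn, hGint⟩ := Gprops n r δ hr hδ hδr
    rw [keystep n r δ]
    have hslice := slicestep n r δ hr hδ hδr ih
    simp_rw [hslice]
    rw [lintegral_indicator measurableSet_Ioo]
    have hx : ∫⁻ x in Ioo (-r) r, ENNReal.ofReal ((fun x =>
        if |x| < δ / r ^ (n+1) then (2*r)^(n+1)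
        else 2^(n+1) * (δ/|x|) * ∑ t ∈ Finset.range (n+1),
          (1 / (t.factorial : ℝ)) * Real.log (r^(n+1) * |x| / δ) ^ t) x)
        = ENNReal.ofReal (∫ x in Ioo (-r) r, (fun x =>
        if |x| < δ / r ^ (n+1) then (2*r)^(n+1)
        else 2^(n+1) * (δ/|x|) * ∑ t ∈ Finset.range (n+1),
          (1 / (t.factorial : ℝ)) * Real.log (r^(n+1) * |x| / δ) ^ t) x) :=
      (MeasureTheory.ofReal_integral_eq_lintegral_ofReal
        (hGint.mono_set Ioo_subset_Icc_self) (ae_of_all _ hGnn)).symm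
    rw [hx, realint n r δ hr hδ hδr hGint]

end Stmt13Aux

theorem statement13 (d : ℕ) (hd : 1 ≤ d) (r δ : ℝ) (hr : 0 < r) (hδ : 0 < δ)
    (hδr : δ ≤ r ^ d) :
    (volume {z : Fin d → ℝ | (∀ i, |z i| < r) ∧ |∏ i, z i| < δ}).toReal =
      2 ^ d * δ *
        ∑ t ∈ Finset.range d, (1 / (t.factorial : ℝ)) * Real.log (r ^ d / δ) ^ t := by
  obtain ⟨n, rfl⟩ : ∃ n, d = n + 1 := ⟨d - 1, (Nat.succ_pred_eq_of_pos hd).symm⟩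
  rw [Stmt13Aux.mainlemma n r δ hr hδ hδr]
  rw [ENNReal.toReal_ofReal]
  have hL : 0 ≤ Real.log (r ^ (n+1) / δ) := Real.log_nonneg ((one_le_div hδ).2 hδr)
  have : 0 ≤ ∑ t ∈ Finset.range (n+1), (1 / (t.factorial : ℝ)) * Real.log (r ^ (n+1) / δ) ^ t := by
    apply Finset.sum_nonneg; intro t _; positivity
  positivity
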